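/- Let Ω ⊆ ℝⁿ be open and u ∈ C¹(Ω). Suppose that for every bounded open Ω' with closure in Ω, every x ∈ closure(Ω') with |Du(x)| = sup_{Ω'} |Du|, every X ∈ D^{2,+}u(x) (the feeble second-order superderivatives of u at x), and every ξ ≥ 0, the affine function A(z) := ξ (X Du(x)) · (z − x) satisfies ‖Du‖_{L^∞(Ω')} ≤ ‖Du + DA‖_{L^∞(Ω')}. If moreover |Du| has no local minima in Ω, then u is a viscosity subsolution of Du ⊗ Du : D²u ≥ 0 on Ω, i.e. for every x ∈ Ω and every X ∈ D^{2,+}u(x) one has X : Du(x) ⊗ Du(x) ≥ 0. -/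

import Mathlib

open scoped BigOperators

/-- The gradient vector `Du(x) ∈ ℝⁿ` of a scalar function `u : ℝⁿ → ℝ`. -/
noncomputable def gradv {n : ℕ} (u : (Fin n → ℝ) → ℝ) (x : Fin n → ℝ) : Fin n → ℝ :=
  fun i => fderiv ℝ u x (Pi.single i 1)

/-- The Euclidean norm of a vector in `ℝⁿ`. -/
noncomputable def gnorm {n : ℕ} (z : Fin n → ℝ) : ℝ :=
  Real.sqrt (∑ i, (z i) ^ 2)

/-- The feeble second-order superderivatives `D^{2,+}u(x)`: symmetric matrices `X` with
`Du(x) ≠ 0` and `u(x+z) ≤ u(x) + Du(x)·z + ½ X : z ⊗ z + o(|z|²)` as `z → 0`. -/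
def D2plus {n : ℕ} (u : (Fin n → ℝ) → ℝ) (x : Fin n → ℝ) :
    Set (Matrix (Fin n) (Fin n) ℝ) :=
  {X | X.IsSymm ∧ gradv u x ≠ 0 ∧
    ∀ ε : ℝ, 0 < ε → ∃ δ : ℝ, 0 < δ ∧ ∀ z : Fin n → ℝ, gnorm z < δ →
      u (x + z) ≤ u x + (∑ i, gradv u x i * z i)
        + (1 / 2) * (∑ i, ∑ j, X i j * z i * z j) + ε * (gnorm z) ^ 2}

/-- The `L^∞` norm `‖Du‖_{L^∞(S)}` of the gradient over a set `S`. -/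
noncomputable def supDu {n : ℕ} (u : (Fin n → ℝ) → ℝ) (S : Set (Fin n → ℝ)) : ℝ :=
  sSup ((fun y => gnorm (gradv u y)) '' S)

lemma gnorm_nonneg {n : ℕ} (z : Fin n → ℝ) : 0 ≤ gnorm z := Real.sqrt_nonneg _

lemma gnorm_sq {n : ℕ} (z : Fin n → ℝ) : gnorm z ^ 2 = ∑ i, (z i) ^ 2 :=
  Real.sq_sqrt (Finset.sum_nonneg fun i _ => sq_nonneg _)

lemma gnorm_zero {n : ℕ} : gnorm (0 : Fin n → ℝ) = 0 := by
  simp [gnorm]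

lemma gnorm_pos {n : ℕ} {z : Fin n → ℝ} (hz : z ≠ 0) : 0 < gnorm z := by
  rcases (gnorm_nonneg z).lt_or_eq with h | h
  · exact h
  · exfalso; apply hz
    have h0 : ∑ i, (z i) ^ 2 = 0 :=
      (Real.sqrt_eq_zero (Finset.sum_nonneg fun i _ => sq_nonneg _)).mp h.symm
    funext i
    have := (Finset.sum_eq_zero_iff_of_nonneg (fun i _ => sq_nonneg (z i))).mp h0 i
      (Finset.mem_univ i)
    exact pow_eq_zero_iff (n := 2) (by norm_num) |>.mp this

lemma gnorm_cs {n : ℕ} (a b : Fin n → ℝ) :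
    (∑ i, a i * b i) ≤ gnorm a * gnorm b := by
  have h := Finset.sum_mul_sq_le_sq_mul_sq Finset.univ a b
  calc (∑ i, a i * b i) ≤ |∑ i, a i * b i| := le_abs_self _
    _ = Real.sqrt ((∑ i, a i * b i) ^ 2) := (Real.sqrt_sq_eq_abs _).symm
    _ ≤ Real.sqrt ((∑ i, (a i) ^ 2) * (∑ i, (b i) ^ 2)) := Real.sqrt_le_sqrt h
    _ = _ := Real.sqrt_mul (Finset.sum_nonneg fun i _ => sq_nonneg _) _

lemma gnorm_expand {n : ℕ} (q v : Fin n → ℝ) (t : ℝ) :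
    gnorm (q + t • v) ^ 2 = gnorm q ^ 2 + 2 * t * (∑ i, q i * v i) + t ^ 2 * gnorm v ^ 2 := by
  rw [gnorm_sq, gnorm_sq, gnorm_sq, Finset.mul_sum, Finset.mul_sum,
    ← Finset.sum_add_distrib, ← Finset.sum_add_distrib]
  exact Finset.sum_congr rfl fun i _ => by
    simp only [Pi.add_apply, Pi.smul_apply, smul_eq_mul]; ring

lemma gnorm_continuous {n : ℕ} : Continuous (gnorm (n := n)) := by
  unfold gnorm
  exact Real.continuous_sqrt.comp
    (continuous_finset_sum _ fun i _ => (continuous_apply i).pow 2)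


/-- Theorem 4.1, first direction: the designated affine minimality property
implies that `u` is a viscosity subsolution of `Du ⊗ Du : D²u ≥ 0` on `Ω`. -/
theorem stmt8 {n : ℕ} (Ω : Set (Fin n → ℝ)) (hΩ : IsOpen Ω)
    (u : (Fin n → ℝ) → ℝ) (hu : ContDiffOn ℝ 1 u Ω)
    (hmin : ∀ x ∈ Ω, ¬ IsLocalMin (fun y => gnorm (gradv u y)) x)
    (hvar : ∀ Ω' : Set (Fin n → ℝ), IsOpen Ω' → Bornology.IsBounded Ω' →
      closure Ω' ⊆ Ω → ∀ x ∈ closure Ω', gnorm (gradv u x) = supDu u Ω' →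
      ∀ X ∈ D2plus u x, ∀ ξ : ℝ, 0 ≤ ξ →
        supDu u Ω' ≤
          sSup ((fun y => gnorm (gradv u y + ξ • X.mulVec (gradv u x))) '' Ω')) :
    ∀ x ∈ Ω, ∀ X ∈ D2plus u x,
      0 ≤ ∑ i, ∑ j, X i j * (gradv u x i * gradv u x j) := by
  intro x₀ hx₀ X hX
  by_contra hneg
  push_neg at hneg
  have hp0 : gradv u x₀ ≠ 0 := hX.2.1
  set p := gradv u x₀ with hp
  set Xp := X.mulVec p with hXpdef
  set c : ℝ := -(∑ i, ∑ j, X i j * (p i * p j)) with hc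
  have hcpos : 0 < c := by rw [hc]; linarith
  set M : ℝ := gnorm Xp with hM
  have hM0 : 0 ≤ M := gnorm_nonneg _
  set ξ : ℝ := c / (M ^ 2 + 1) with hξ
  have hξpos : 0 < ξ := div_pos hcpos (by positivity)
  set δ' : ℝ := c / (2 * (M + 1)) with hδ'
  have hδ'pos : 0 < δ' := div_pos hcpos (by positivity)
  set η : ℝ := ξ * c - ξ ^ 2 * M ^ 2 with hη
  have hξM : ξ * M ^ 2 < c := by
    rw [hξ, div_mul_eq_mul_div, div_lt_iff₀ (by positivity)]
    nlinarith [sq_nonneg M]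
  have hηpos : 0 < η := by rw [hη]; nlinarith
  have hδM : δ' * M ≤ c / 2 := by
    rw [hδ', div_mul_eq_mul_div, div_le_div_iff₀ (by positivity) (by norm_num : (0:ℝ) < 2)]
    nlinarith
  -- continuity of the gradient
  have hfderiv : ContinuousOn (fderiv ℝ u) Ω := hu.continuousOn_fderiv_of_isOpen hΩ le_rfl
  have hgradv : ContinuousOn (gradv u) Ω := by
    apply continuousOn_pi.mpr
    intro i
    exact (ContinuousLinearMap.apply ℝ ℝ (Pi.single i 1 : Fin n → ℝ)).continuous.comp_continuousOn
      hfderiv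
  set f : (Fin n → ℝ) → ℝ := fun y => gnorm (gradv u y) with hf
  have hfcont : ContinuousOn f Ω := gnorm_continuous.comp_continuousOn hgradv
  have hgrad_at : ContinuousAt (gradv u) x₀ := hgradv.continuousAt (hΩ.mem_nhds hx₀)
  have hf_at : ContinuousAt f x₀ := hfcont.continuousAt (hΩ.mem_nhds hx₀)
  -- a radius around x₀
  have hsub_at : ContinuousAt (fun y => gnorm (gradv u y - p)) x₀ :=
    gnorm_continuous.continuousAt.comp (hgrad_at.sub continuousAt_const)
  have E1 : ∀ᶠ y in nhds x₀, gnorm (gradv u y - p) < δ' := by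
    have h0 : (fun y => gnorm (gradv u y - p)) x₀ = 0 := by simp only []; rw [← hp, sub_self, gnorm_zero]
    have := hsub_at
    rw [ContinuousAt] at this
    rw [← hp, sub_self, gnorm_zero] at this
    exact this.eventually_lt_const hδ'pos
  obtain ⟨r1, hr1pos, hr1⟩ := Metric.eventually_nhds_iff.mp E1
  obtain ⟨r0, hr0pos, hr0⟩ := Metric.isOpen_iff.mp hΩ x₀ hx₀
  set r : ℝ := min (r0 / 2) r1 with hrdef
  have hrpos : 0 < r := lt_min (by linarith) hr1pos
  have hball_sub : Metric.ball x₀ r ⊆ Ω :=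
    (Metric.ball_subset_ball ((min_le_left _ _).trans (by linarith))).trans hr0
  have hcb_sub : Metric.closedBall x₀ r ⊆ Ω := by
    refine (Metric.closedBall_subset_ball ?_).trans hr0
    calc r ≤ r0 / 2 := min_le_left _ _
      _ < r0 := by linarith
  have hball_δ : ∀ y ∈ Metric.ball x₀ r, gnorm (gradv u y - p) < δ' := fun y hy =>
    hr1 (lt_of_lt_of_le (Metric.mem_ball.mp hy) (min_le_right _ _))
  -- the test domain
  set Ω' : Set (Fin n → ℝ) := Metric.ball x₀ r ∩ f ⁻¹' (Set.Iio (gnorm p)) with hΩ'def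
  have hopen : IsOpen Ω' :=
    (hfcont.mono hball_sub).isOpen_inter_preimage Metric.isOpen_ball isOpen_Iio
  have hbdd : Bornology.IsBounded Ω' :=
    Metric.isBounded_ball.subset Set.inter_subset_left
  have hclos : closure Ω' ⊆ Ω :=
    (closure_mono Set.inter_subset_left).trans
      (Metric.closure_ball_subset_closedBall.trans hcb_sub)
  have hball_ev : ∀ᶠ y in nhds x₀, y ∈ Metric.ball x₀ r :=
    Metric.isOpen_ball.mem_nhds (Metric.mem_ball_self hrpos)
  have hfreq : ∃ᶠ y in nhds x₀, f y < gnorm p := by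
    have := hmin x₀ hx₀
    simpa [IsLocalMin, IsMinFilter, Filter.not_eventually, not_le, hf] using this
  have hmem_clos : x₀ ∈ closure Ω' :=
    mem_closure_iff_frequently.mpr
      ((hfreq.and_eventually hball_ev).mono fun y hy => ⟨hy.2, hy.1⟩)
  have hBdd : BddAbove ((fun y => gnorm (gradv u y)) '' Ω') := by
    refine ⟨gnorm p, ?_⟩
    rintro _ ⟨y, hy, rfl⟩
    exact le_of_lt hy.2
  have hsup_le : supDu u Ω' ≤ gnorm p := by
    apply Real.sSup_le
    · rintro _ ⟨y, hy, rfl⟩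
      exact le_of_lt hy.2
    · exact gnorm_nonneg p
  have hsup_ge : gnorm p ≤ supDu u Ω' := by
    apply le_of_forall_pos_le_add
    intro ε hε
    have hf_ev : ∀ᶠ y in nhds x₀, gnorm p - ε < f y := by
      have := hf_at
      rw [ContinuousAt] at this
      exact this.eventually_const_lt (by simp [hf]; linarith)
    obtain ⟨y, hy1, hy2, hy3⟩ := (hfreq.and_eventually (hf_ev.and hball_ev)).exists
    have hmem : f y ∈ (fun y => gnorm (gradv u y)) '' Ω' := ⟨y, ⟨hy3, hy1⟩, rfl⟩
    have := le_csSup hBdd hmem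
    rw [supDu]
    linarith
  have hsup : gnorm p = supDu u Ω' := le_antisymm hsup_ge hsup_le
  -- apply the variational hypothesis
  have hvar' := hvar Ω' hopen hbdd hclos x₀ hmem_clos hsup X hX ξ hξpos.le
  -- bound the right-hand side
  have hdotp : (∑ i, p i * Xp i) = -c := by
    rw [hc, neg_neg, hXpdef]
    refine Finset.sum_congr rfl fun i _ => ?_
    rw [Matrix.mulVec, dotProduct, Finset.mul_sum]
    exact Finset.sum_congr rfl fun j _ => by ring
  have hK : sSup ((fun y => gnorm (gradv u y + ξ • Xp)) '' Ω')
      ≤ Real.sqrt (gnorm p ^ 2 - η) := by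
    apply Real.sSup_le
    · rintro _ ⟨y, hy, rfl⟩
      set q := gradv u y with hq
      have hqp : gnorm (q - p) < δ' := hball_δ y hy.1
      have hqlt : gnorm q < gnorm p := hy.2
      have h1 : (∑ i, (q - p) i * Xp i) ≤ δ' * M := by
        calc (∑ i, (q - p) i * Xp i) ≤ gnorm (q - p) * gnorm Xp := gnorm_cs _ _
          _ ≤ δ' * M := mul_le_mul_of_nonneg_right hqp.le hM0
      have hdecomp : (∑ i, q i * Xp i) = (∑ i, p i * Xp i) + (∑ i, (q - p) i * Xp i) := by
        rw [← Finset.sum_add_distrib]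
        exact Finset.sum_congr rfl fun i _ => by simp [Pi.sub_apply]; ring
      have hdot : (∑ i, q i * Xp i) ≤ -c / 2 := by
        rw [hdecomp, hdotp]; linarith
      have hq2 : gnorm q ^ 2 ≤ gnorm p ^ 2 :=
        pow_le_pow_left₀ (gnorm_nonneg q) hqlt.le 2
      have hsq : gnorm (q + ξ • Xp) ^ 2 ≤ gnorm p ^ 2 - η := by
        rw [gnorm_expand, hη]
        nlinarith
      calc gnorm (q + ξ • Xp) = Real.sqrt (gnorm (q + ξ • Xp) ^ 2) :=
            (Real.sqrt_sq (gnorm_nonneg _)).symm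
        _ ≤ Real.sqrt (gnorm p ^ 2 - η) := Real.sqrt_le_sqrt hsq
    · exact Real.sqrt_nonneg _
  have hlt : Real.sqrt (gnorm p ^ 2 - η) < gnorm p := by
    rw [Real.sqrt_lt' (gnorm_pos hp0)]
    linarith
  rw [← hsup] at hvar'
  linarith
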